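/- Let G be the graph on vertex set ℤ × S (S nonempty) with (m,s) adjacent to (n,t) iff |m − n| = 1, equipped with the graph metric. Then for any three vertices x, y, z, and any geodesic vertex-paths joining them pairwise, each path lies in the closed 2-neighborhood of the union of the other two paths. -/

import Mathlib

/-- The layered graph on `ℤ × S`: `(m, s)` and `(n, t)` are adjacent iff
`|m − n| = 1`. -/
def layeredGraph (S : Type*) : SimpleGraph (ℤ × S) where
  Adj u v := |u.1 - v.1| = 1
  symm := by
    constructor
    intro u v h
    simpa [abs_sub_comm] using h
  loopless := by
    constructor
    intro u h
    simp at h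

/-- `f` is a geodesic vertex-path of length `k` from `x` to `y` in `G`. -/
def IsGeodesicVertexPath {V : Type*} (G : SimpleGraph V) (x y : V) (k : ℕ)
    (f : ℕ → V) : Prop :=
  f 0 = x ∧ f k = y ∧ (∀ i < k, G.Adj (f i) (f (i + 1))) ∧ k = G.dist x y

section Aux

variable {S : Type*}

lemma lg_adj_of_natAbs (u v : ℤ × S) (h : (u.1 - v.1).natAbs = 1) :
    (layeredGraph S).Adj u v := by
  show |u.1 - v.1| = 1
  rw [Int.abs_eq_natAbs, h, Nat.cast_one]

lemma lg_natAbs_of_adj {u v : ℤ × S} (h : (layeredGraph S).Adj u v) :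
    (u.1 - v.1).natAbs = 1 := by
  have h' : |u.1 - v.1| = 1 := h
  rw [Int.abs_eq_natAbs] at h'
  exact_mod_cast h'

lemma lg_walk_of_natAbs (n : ℕ) (hn : 1 ≤ n) :
    ∀ u v : ℤ × S, (u.1 - v.1).natAbs = n →
      ∃ p : (layeredGraph S).Walk u v, p.length = n := by
  induction n with
  | zero => omega
  | succ m ih =>
    intro u v h
    rcases Nat.eq_zero_or_pos m with hm | hm
    · subst hm
      exact ⟨SimpleGraph.Walk.cons (lg_adj_of_natAbs u v h) SimpleGraph.Walk.nil, rfl⟩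
    · set w : ℤ × S := (if u.1 < v.1 then u.1 + 1 else u.1 - 1, u.2) with hw
      have a1 : (layeredGraph S).Adj u w := by
        apply lg_adj_of_natAbs
        simp only [hw]
        split <;> omega
      have h2 : (w.1 - v.1).natAbs = m := by
        simp only [hw]
        split <;> omega
      obtain ⟨p, hp⟩ := ih hm w v h2
      exact ⟨SimpleGraph.Walk.cons a1 p, by simp [hp]⟩

lemma lg_dist_le_two (u v : ℤ × S) (h : (u.1 - v.1).natAbs ≤ 2) :
    (layeredGraph S).dist u v ≤ 2 := by
  by_cases h1 : (u.1 - v.1).natAbs = 1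
  · have := SimpleGraph.dist_le
      (SimpleGraph.Walk.cons (lg_adj_of_natAbs u v h1) SimpleGraph.Walk.nil)
    simpa using this.trans (by norm_num)
  · set w : ℤ × S := (if u.1 < v.1 then u.1 + 1 else u.1 - 1, v.2) with hw
    have a1 : (layeredGraph S).Adj u w := by
      apply lg_adj_of_natAbs
      simp only [hw]
      split <;> omega
    have a2 : (layeredGraph S).Adj w v := by
      apply lg_adj_of_natAbs
      simp only [hw]
      split <;> omega
    have := SimpleGraph.dist_le
      (SimpleGraph.Walk.cons a1 (SimpleGraph.Walk.cons a2 SimpleGraph.Walk.nil))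
    simpa using this

lemma lg_dist_le_max (u v : ℤ × S) :
    (layeredGraph S).dist u v ≤ max (u.1 - v.1).natAbs 2 := by
  by_cases h : (u.1 - v.1).natAbs ≤ 2
  · exact (lg_dist_le_two u v h).trans (le_max_right _ _)
  · obtain ⟨p, hp⟩ := lg_walk_of_natAbs (u.1 - v.1).natAbs (by omega) u v rfl
    exact le_trans (SimpleGraph.dist_le p) (by rw [hp]; exact le_max_left _ _)

lemma path_forward (a : ℕ → ℤ) (k : ℕ)
    (hstep : ∀ i < k, (a i - a (i + 1)).natAbs = 1) :
    ∀ i ≤ k, (a i - a 0).natAbs ≤ i := by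
  intro i
  induction i with
  | zero => simp
  | succ n ih =>
    intro h
    have h1 := ih (by omega)
    have h2 := hstep n (by omega)
    omega

lemma path_backward (a : ℕ → ℤ) (k : ℕ)
    (hstep : ∀ i < k, (a i - a (i + 1)).natAbs = 1) :
    ∀ i ≤ k, (a i - a k).natAbs ≤ k - i := by
  intro i hi
  have hb := path_forward (fun j => a (k - j)) k ?_ (k - i) (by omega)
  · simp only [Nat.sub_zero] at hb
    have e : k - (k - i) = i := by omega
    rw [e] at hb
    omega
  · intro j hj
    have h2 := hstep (k - j - 1) (by omega)
    have e2 : k - j - 1 + 1 = k - j := by omega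
    have e3 : k - (j + 1) = k - j - 1 := by omega
    rw [e2] at h2
    rw [e3]
    omega

lemma path_ivt (a : ℕ → ℤ) (k : ℕ)
    (hstep : ∀ i < k, (a i - a (i + 1)).natAbs = 1) :
    ∀ c : ℤ, min (a 0) (a k) ≤ c → c ≤ max (a 0) (a k) → ∃ j ≤ k, a j = c := by
  induction k with
  | zero => intro c h1 h2; exact ⟨0, le_refl _, by omega⟩
  | succ n ih =>
    intro c h1 h2
    by_cases hc : min (a 0) (a n) ≤ c ∧ c ≤ max (a 0) (a n)
    · obtain ⟨j, hj, hj2⟩ := ih (fun i hi => hstep i (by omega)) c hc.1 hc.2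
      exact ⟨j, by omega, hj2⟩
    · have h2' := hstep n (by omega)
      exact ⟨n + 1, le_refl _, by omega⟩

lemma lg_main (x y z : ℤ × S) (k₁ k₂ k₃ : ℕ) (f₁ f₂ f₃ : ℕ → ℤ × S)
    (h₁ : IsGeodesicVertexPath (layeredGraph S) x y k₁ f₁)
    (h₂ : IsGeodesicVertexPath (layeredGraph S) y z k₂ f₂)
    (h₃ : IsGeodesicVertexPath (layeredGraph S) z x k₃ f₃) :
    ∀ i ≤ k₁, (∃ j ≤ k₂, (layeredGraph S).dist (f₁ i) (f₂ j) ≤ 2) ∨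
      (∃ j ≤ k₃, (layeredGraph S).dist (f₁ i) (f₃ j) ≤ 2) := by
  obtain ⟨hx1, hy1, hadj1, hk1⟩ := h₁
  obtain ⟨hy2, hz2, hadj2, hk2⟩ := h₂
  obtain ⟨hz3, hx3, hadj3, hk3⟩ := h₃
  intro i hi
  have s1 : ∀ j < k₁, ((f₁ j).1 - (f₁ (j + 1)).1).natAbs = 1 :=
    fun j hj => lg_natAbs_of_adj (hadj1 j hj)
  have s2 : ∀ j < k₂, ((f₂ j).1 - (f₂ (j + 1)).1).natAbs = 1 :=
    fun j hj => lg_natAbs_of_adj (hadj2 j hj)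
  have s3 : ∀ j < k₃, ((f₃ j).1 - (f₃ (j + 1)).1).natAbs = 1 :=
    fun j hj => lg_natAbs_of_adj (hadj3 j hj)
  set A := x.1 with hA
  set B := y.1 with hB
  set C := z.1 with hC
  set v := (f₁ i).1 with hv
  have hf : (v - A).natAbs ≤ i := by
    have := path_forward (fun j => (f₁ j).1) k₁ s1 i hi
    simp only [hx1] at this
    exact this
  have hback : (v - B).natAbs ≤ k₁ - i := by
    have := path_backward (fun j => (f₁ j).1) k₁ s1 i hi
    simp only [hy1] at this
    exact this
  have hkmax : k₁ ≤ max (A - B).natAbs 2 := by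
    rw [hk1]
    exact lg_dist_le_max x y
  set c : ℤ := max (min A B) (min v (max A B)) with hc
  have hcab : min A B ≤ c ∧ c ≤ max A B ∧ (v - c).natAbs ≤ 1 := by omega
  have e20 : (f₂ 0).1 = B := by rw [hy2]
  have e2k : (f₂ k₂).1 = C := by rw [hz2]
  have e30 : (f₃ 0).1 = C := by rw [hz3]
  have e3k : (f₃ k₃).1 = A := by rw [hx3]
  by_cases hbc : min B C ≤ c ∧ c ≤ max B C
  · obtain ⟨j, hj, hje⟩ := path_ivt (fun n => (f₂ n).1) k₂ s2 c
      (by simp only [e20, e2k]; exact hbc.1) (by simp only [e20, e2k]; exact hbc.2)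
    refine Or.inl ⟨j, hj, lg_dist_le_two _ _ ?_⟩

    rw [hje]
    omega
  · have hca : min C A ≤ c ∧ c ≤ max C A := by omega
    obtain ⟨j, hj, hje⟩ := path_ivt (fun n => (f₃ n).1) k₃ s3 c
      (by simp only [e30, e3k]; exact hca.1) (by simp only [e30, e3k]; exact hca.2)
    refine Or.inr ⟨j, hj, lg_dist_le_two _ _ ?_⟩

    rw [hje]
    omega

end Aux

/-- in the layered graph, any geodesic triangle (three geodesic
vertex-paths joining three vertices pairwise) is 2-slim: each path lies in the
closed 2-neighborhood of the union of the other two. -/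
theorem stmt_11 (S : Type*) [Nonempty S] (x y z : ℤ × S)
    (k₁ k₂ k₃ : ℕ) (f₁ f₂ f₃ : ℕ → ℤ × S)
    (h₁ : IsGeodesicVertexPath (layeredGraph S) x y k₁ f₁)
    (h₂ : IsGeodesicVertexPath (layeredGraph S) y z k₂ f₂)
    (h₃ : IsGeodesicVertexPath (layeredGraph S) z x k₃ f₃) :
    (∀ i ≤ k₁, (∃ j ≤ k₂, (layeredGraph S).dist (f₁ i) (f₂ j) ≤ 2) ∨
      (∃ j ≤ k₃, (layeredGraph S).dist (f₁ i) (f₃ j) ≤ 2)) ∧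
    (∀ i ≤ k₂, (∃ j ≤ k₃, (layeredGraph S).dist (f₂ i) (f₃ j) ≤ 2) ∨
      (∃ j ≤ k₁, (layeredGraph S).dist (f₂ i) (f₁ j) ≤ 2)) ∧
    (∀ i ≤ k₃, (∃ j ≤ k₁, (layeredGraph S).dist (f₃ i) (f₁ j) ≤ 2) ∨
      (∃ j ≤ k₂, (layeredGraph S).dist (f₃ i) (f₂ j) ≤ 2)) :=
  ⟨lg_main x y z k₁ k₂ k₃ f₁ f₂ f₃ h₁ h₂ h₃,
   lg_main y z x k₂ k₃ k₁ f₂ f₃ f₁ h₂ h₃ h₁,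
   lg_main z x y k₃ k₁ k₂ f₃ f₁ f₂ h₃ h₁ h₂⟩
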